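/- Let n be a positive integer, Φ(u) = −u²/2 + u^{n+2}/((n+1)(n+2)), a = (n+1)^{1/n}, and B = ((n+1)(n+2)/2)^{1/n}. Suppose δ : (a, B) → (0, a) is a differentiable function satisfying Φ(δ(u)) = Φ(u) for all u ∈ (a, B). Then the function T_n(u) = Σ_{k=0}^{n} u^{n−k} δ(u)^{k} is strictly decreasing on (a, B). -/

import Mathlib

-- AM-GM sum lemma
lemma amgm_sum (n : ℕ) (hn : 1 ≤ n) (p q : ℝ) (hq : 0 < q) (hqp : q < p) :
    ((n : ℝ) + 1) * (p ^ n * q ^ n) <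
      ∑ j ∈ Finset.range (n + 1), (p ^ 2) ^ j * (q ^ 2) ^ (n - j) := by
  have hp : 0 < p := hq.trans hqp
  have hrefl : ∑ j ∈ Finset.range (n + 1), (p ^ 2) ^ (n - j) * (q ^ 2) ^ j
      = ∑ j ∈ Finset.range (n + 1), (p ^ 2) ^ j * (q ^ 2) ^ (n - j) := by
    rw [← Finset.sum_range_reflect]
    apply Finset.sum_congr rfl
    intro j hj
    have hj' : j ≤ n := Nat.lt_succ_iff.mp (Finset.mem_range.mp hj)
    simp only [Nat.add_sub_cancel]
    rw [Nat.sub_sub_self hj']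
  have hterm : ∀ j ∈ Finset.range (n + 1),
      2 * (p ^ n * q ^ n) ≤ (p ^ 2) ^ j * (q ^ 2) ^ (n - j) + (p ^ 2) ^ (n - j) * (q ^ 2) ^ j := by
    intro j hj
    have hj' : j ≤ n := Nat.lt_succ_iff.mp (Finset.mem_range.mp hj)
    have hx : (p ^ 2) ^ j * (q ^ 2) ^ (n - j) = (p ^ j * q ^ (n - j)) ^ 2 := by
      rw [mul_pow, ← pow_mul, ← pow_mul, ← pow_mul, ← pow_mul]; ring_nf
    have hy : (p ^ 2) ^ (n - j) * (q ^ 2) ^ j = (p ^ (n - j) * q ^ j) ^ 2 := by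
      rw [mul_pow, ← pow_mul, ← pow_mul, ← pow_mul, ← pow_mul]; ring_nf
    have hxy : (p ^ j * q ^ (n - j)) * (p ^ (n - j) * q ^ j) = p ^ n * q ^ n := by
      rw [show (p ^ j * q ^ (n - j)) * (p ^ (n - j) * q ^ j)
          = (p ^ j * p ^ (n - j)) * (q ^ (n - j) * q ^ j) by ring,
        ← pow_add, ← pow_add, Nat.add_sub_cancel' hj', Nat.sub_add_cancel hj']
    rw [hx, hy]
    nlinarith [sq_nonneg (p ^ j * q ^ (n - j) - p ^ (n - j) * q ^ j)]
  have hzero : (0 : ℕ) ∈ Finset.range (n + 1) := by simp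
  have hstrict : 2 * (p ^ n * q ^ n)
      < (p ^ 2) ^ 0 * (q ^ 2) ^ (n - 0) + (p ^ 2) ^ (n - 0) * (q ^ 2) ^ 0 := by
    simp only [pow_zero, one_mul, mul_one, Nat.sub_zero]
    have hpq : q ^ n < p ^ n := pow_lt_pow_left₀ hqp hq.le (by omega)
    have e1 : (p ^ 2) ^ n = (p ^ n) ^ 2 := by rw [← pow_mul, ← pow_mul]; ring_nf
    have e2 : (q ^ 2) ^ n = (q ^ n) ^ 2 := by rw [← pow_mul, ← pow_mul]; ring_nf
    rw [e1, e2]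
    nlinarith [sq_nonneg (p ^ n - q ^ n)]
  have hlt : ∑ j ∈ Finset.range (n + 1), (2 * (p ^ n * q ^ n))
      < ∑ j ∈ Finset.range (n + 1),
          ((p ^ 2) ^ j * (q ^ 2) ^ (n - j) + (p ^ 2) ^ (n - j) * (q ^ 2) ^ j) := by
    apply Finset.sum_lt_sum hterm ⟨0, hzero, hstrict⟩
  rw [Finset.sum_add_distrib, hrefl, Finset.sum_const, Finset.card_range] at hlt
  have : ((n + 1 : ℕ) : ℝ) * (2 * (p ^ n * q ^ n))
      = ((n : ℝ) + 1) * (2 * (p ^ n * q ^ n)) := by push_cast; ring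
  rw [nsmul_eq_mul, this] at hlt
  linarith

-- Br positivity
lemma br_pos (n : ℕ) (hn : 1 ≤ n) (p q : ℝ) (hq : 0 < q) (hqp : q < p) :
    0 < (p ^ n) ^ 2 * p ^ 2 - (q ^ n) ^ 2 * q ^ 2
        - ((n : ℝ) + 1) * (p ^ n) * (q ^ n) * (p ^ 2 - q ^ 2) := by
  have hp : 0 < p := hq.trans hqp
  have h2 : (0 : ℝ) < p ^ 2 - q ^ 2 := by nlinarith
  have hgeo : (∑ j ∈ Finset.range (n + 1), (p ^ 2) ^ j * (q ^ 2) ^ (n + 1 - 1 - j))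
      * (p ^ 2 - q ^ 2) = (p ^ 2) ^ (n + 1) - (q ^ 2) ^ (n + 1) := geom_sum₂_mul _ _ (n + 1)
  simp only [Nat.add_sub_cancel] at hgeo
  have hsum := amgm_sum n hn p q hq hqp
  have key := mul_pos (sub_pos.2 hsum) h2
  rw [sub_mul, hgeo] at key
  have e1 : ((p ^ 2 : ℝ)) ^ (n + 1) = (p ^ n) ^ 2 * p ^ 2 := by
    rw [← pow_mul, ← pow_mul, ← pow_add]; congr 1; omega
  have e2 : ((q ^ 2 : ℝ)) ^ (n + 1) = (q ^ n) ^ 2 * q ^ 2 := by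
    rw [← pow_mul, ← pow_mul, ← pow_add]; congr 1; omega
  rw [e1, e2] at key
  nlinarith [key]

-- key inequality
lemma key_ineq (nR : ℝ) (hn : 1 ≤ nR) (p q P Q : ℝ) (hq : 0 < q) (hqp : q < p)
    (hBr : 0 < P ^ 2 * p ^ 2 - Q ^ 2 * q ^ 2 - (nR + 1) * P * Q * (p ^ 2 - q ^ 2))
    (hc : 2 * (P * p ^ 2 - Q * q ^ 2) = (nR + 1) * (nR + 2) * (p ^ 2 - q ^ 2)) :
    0 < (P * p - (nR + 1) * p) * (P * p - (nR + 1) * Q * p + nR * Q * q)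
        + (Q * q - (nR + 1) * q) * (nR * P * p - (nR + 1) * P * q + Q * q) := by
  have hp : 0 < p := hq.trans hqp
  have hpq2 : (0:ℝ) < p ^ 2 - q ^ 2 := by nlinarith
  have hW : 0 < P * p ^ 2 - Q * q ^ 2 := by
    nlinarith [mul_pos (mul_pos (show (0:ℝ) < nR + 1 by linarith) (show (0:ℝ) < nR + 2 by linarith)) hpq2]
  set X := (P * p - (nR + 1) * p) * (P * p - (nR + 1) * Q * p + nR * Q * q)
      + (Q * q - (nR + 1) * q) * (nR * P * p - (nR + 1) * P * q + Q * q) with hX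
  have hEq : 2 * X * (P * p ^ 2 - Q * q ^ 2)
      = nR * (nR + 1) * (p - q) ^ 2
        * (P ^ 2 * p ^ 2 - Q ^ 2 * q ^ 2 - (nR + 1) * P * Q * (p ^ 2 - q ^ 2)) := by
    rw [hX]
    linear_combination (q ^ 2 * Q ^ 2 - (nR + 1) * q ^ 2 * P * Q + 2 * nR * p * q * P * Q
      - (nR + 1) * p ^ 2 * P * Q + p ^ 2 * P ^ 2) * hc
  by_contra hcon
  push_neg at hcon
  have h1 : 2 * X * (P * p ^ 2 - Q * q ^ 2) ≤ 0 := by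
    apply mul_nonpos_of_nonpos_of_nonneg _ hW.le
    linarith
  rw [hEq] at h1
  have h2 : 0 < nR * (nR + 1) * (p - q) ^ 2
      * (P ^ 2 * p ^ 2 - Q ^ 2 * q ^ 2 - (nR + 1) * P * Q * (p ^ 2 - q ^ 2)) := by
    apply mul_pos _ hBr
    have h3 : (0:ℝ) < (p - q) ^ 2 := pow_pos (sub_pos.2 hqp) 2
    have h4 : (0:ℝ) < nR * (nR + 1) := by nlinarith
    exact mul_pos h4 h3
  linarith

open Topology Filter in
theorem stmt_11 (n : ℕ) (hn : 1 ≤ n) (Φ : ℝ → ℝ)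
    (hΦ : ∀ u : ℝ, Φ u = -u ^ 2 / 2 + u ^ (n + 2) / (((n : ℝ) + 1) * ((n : ℝ) + 2)))
    (a B : ℝ) (ha : a = ((n : ℝ) + 1) ^ ((1 : ℝ) / n))
    (hB : B = (((n : ℝ) + 1) * ((n : ℝ) + 2) / 2) ^ ((1 : ℝ) / n))
    (δ : ℝ → ℝ)
    (hδmem : ∀ u ∈ Set.Ioo a B, δ u ∈ Set.Ioo (0 : ℝ) a)
    (hδdiff : DifferentiableOn ℝ δ (Set.Ioo a B))
    (hδΦ : ∀ u ∈ Set.Ioo a B, Φ (δ u) = Φ u) :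
    StrictAntiOn (fun u => ∑ k ∈ Finset.range (n + 1), u ^ (n - k) * δ u ^ k)
      (Set.Ioo a B) := by
  have hn0 : n ≠ 0 := by omega
  have hnR : (1 : ℝ) ≤ (n : ℝ) := by exact_mod_cast hn
  have hm1 : (0 : ℝ) < (n : ℝ) + 1 := by linarith
  have hm2 : (0 : ℝ) < (n : ℝ) + 2 := by linarith
  have hnne : ((n : ℝ)) ≠ 0 := by positivity
  have ha_pow : a ^ n = (n : ℝ) + 1 := by
    rw [ha, ← Real.rpow_natCast (((n : ℝ) + 1) ^ ((1 : ℝ) / n)) n, ← Real.rpow_mul hm1.le,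
      show (1 : ℝ) / n * n = 1 by field_simp, Real.rpow_one]
  have ha0 : 0 < a := by rw [ha]; positivity
  apply strictAntiOn_of_deriv_neg (convex_Ioo a B)
  · exact continuousOn_finset_sum _ fun k _ =>
      ((continuous_pow (n - k)).continuousOn.mul (hδdiff.continuousOn.pow k))
  · intro x hx
    rw [interior_Ioo] at hx
    have hxmem : x ∈ Set.Ioo a B := hx
    obtain ⟨hax, hxB⟩ := hx
    obtain ⟨hq0, hqa⟩ := hδmem x hxmem
    have hqx : δ x < x := lt_trans hqa hax
    have hx0 : 0 < x := ha0.trans hax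
    have hnbhd : Set.Ioo a B ∈ 𝓝 x := isOpen_Ioo.mem_nhds hxmem
    have hdδ : HasDerivAt δ (deriv δ x) x :=
      ((hδdiff x hxmem).differentiableAt hnbhd).hasDerivAt
    set d := deriv δ x with hdd
    -- derivative of Φ
    have hΦder : ∀ y : ℝ, HasDerivAt Φ (y ^ (n + 1) / ((n : ℝ) + 1) - y) y := by
      intro y
      have h0 : Φ = fun u : ℝ => -u ^ 2 / 2 + u ^ (n + 2) / (((n : ℝ) + 1) * ((n : ℝ) + 2)) :=
        funext hΦ
      rw [h0]
      have h1 := (((hasDerivAt_pow 2 y).div_const 2).neg).add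
        ((hasDerivAt_pow (n + 2) y).div_const (((n : ℝ) + 1) * ((n : ℝ) + 2)))
      have h2 : (fun u : ℝ => -(u ^ 2 / 2) + u ^ (n + 2) / (((n : ℝ) + 1) * ((n : ℝ) + 2)))
          = fun u : ℝ => -u ^ 2 / 2 + u ^ (n + 2) / (((n : ℝ) + 1) * ((n : ℝ) + 2)) := by
        funext u; ring
      change HasDerivAt (fun u : ℝ => -(u ^ 2 / 2) + u ^ (n + 2) / (((n : ℝ) + 1) * ((n : ℝ) + 2))) _ y at h1
      rw [h2] at h1
      convert h1 using 1
      have e1 : (2 : ℕ) - 1 = 1 := rfl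
      have e2 : n + 2 - 1 = n + 1 := rfl
      rw [e1, e2]
      push_cast
      field_simp
      ring
    -- chain rule and uniqueness
    have hcomp : HasDerivAt (fun u => Φ (δ u)) ((δ x ^ (n + 1) / ((n : ℝ) + 1) - δ x) * d) x :=
      (hΦder (δ x)).comp x hdδ
    have heq1 : (fun u => Φ (δ u)) =ᶠ[𝓝 x] Φ :=
      Filter.eventuallyEq_of_mem hnbhd (fun y hy => hδΦ y hy)
    have hΦcomp' : HasDerivAt Φ ((δ x ^ (n + 1) / ((n : ℝ) + 1) - δ x) * d) x :=
      hcomp.congr_of_eventuallyEq heq1.symm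
    have hduniq : (δ x ^ (n + 1) / ((n : ℝ) + 1) - δ x) * d = x ^ (n + 1) / ((n : ℝ) + 1) - x :=
      hΦcomp'.unique (hΦder x)
    have hd' : (δ x ^ (n + 1) - ((n : ℝ) + 1) * δ x) * d = x ^ (n + 1) - ((n : ℝ) + 1) * x := by
      have h := congrArg (fun z => ((n : ℝ) + 1) * z) hduniq
      field_simp at h
      linarith
    -- constraint
    have hcon := hδΦ x hxmem
    rw [hΦ (δ x), hΦ x] at hcon
    have hc : 2 * (x ^ (n + 2) - δ x ^ (n + 2))
        = ((n : ℝ) + 1) * ((n : ℝ) + 2) * (x ^ 2 - δ x ^ 2) := by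
      field_simp at hcon
      linarith
    -- quotient derivative
    have hne : x - δ x ≠ 0 := (sub_pos.2 hqx).ne'
    have hf1 : HasDerivAt (fun u => u ^ (n + 1) - δ u ^ (n + 1))
        (((n : ℝ) + 1) * x ^ n - (((n : ℝ) + 1) * δ x ^ n) * d) x := by
      have hpow : HasDerivAt (fun u : ℝ => u ^ (n + 1)) ((↑(n + 1) : ℝ) * x ^ (n + 1 - 1)) x :=
        hasDerivAt_pow (n + 1) x
      have hpow2 : HasDerivAt (fun u => δ u ^ (n + 1)) (((↑(n + 1) : ℝ) * δ x ^ (n + 1 - 1)) * d) x :=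
        (hasDerivAt_pow (n + 1) (δ x)).comp x hdδ
      have := hpow.sub hpow2
      simp only [Nat.add_sub_cancel, Nat.cast_add, Nat.cast_one] at this
      exact this
    have hf2 : HasDerivAt (fun u => u - δ u) (1 - d) x := (hasDerivAt_id x).sub hdδ
    have hquot := hf1.div hf2 hne
    -- T eventually equals the quotient
    have hTeq : Set.EqOn (fun u => ∑ k ∈ Finset.range (n + 1), u ^ (n - k) * δ u ^ k)
        (fun y => (y ^ (n + 1) - δ y ^ (n + 1)) / (y - δ y)) (Set.Ioo a B) := by
      intro y hy
      obtain ⟨hq0y, hqay⟩ := hδmem y hy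
      have hqy : δ y < y := lt_trans hqay hy.1
      have hney : y - δ y ≠ 0 := (sub_pos.2 hqy).ne'
      simp only
      rw [eq_div_iff hney]
      have hgeom := geom_sum₂_mul (δ y) y (n + 1)
      simp only [Nat.add_sub_cancel] at hgeom
      have hTy : ∑ k ∈ Finset.range (n + 1), y ^ (n - k) * δ y ^ k
          = ∑ i ∈ Finset.range (n + 1), δ y ^ i * y ^ (n - i) :=
        Finset.sum_congr rfl fun i _ => mul_comm _ _
      rw [hTy]
      linear_combination -hgeom
    have hTev : (fun u => ∑ k ∈ Finset.range (n + 1), u ^ (n - k) * δ u ^ k)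
        =ᶠ[𝓝 x] fun y => (y ^ (n + 1) - δ y ^ (n + 1)) / (y - δ y) :=
      Filter.eventuallyEq_of_mem hnbhd hTeq
    have hTd : HasDerivAt (fun u => ∑ k ∈ Finset.range (n + 1), u ^ (n - k) * δ u ^ k)
        (((((n : ℝ) + 1) * x ^ n - (((n : ℝ) + 1) * δ x ^ n) * d) * (x - δ x)
          - (x ^ (n + 1) - δ x ^ (n + 1)) * (1 - d)) / (x - δ x) ^ 2) x :=
      hquot.congr_of_eventuallyEq hTev
    rw [hTd.deriv]
    apply div_neg_of_neg_of_pos _ (pow_pos (sub_pos.2 hqx) 2)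
    -- numerator negative
    have hqn : δ x ^ n < (n : ℝ) + 1 := by
      calc δ x ^ n < a ^ n := pow_lt_pow_left₀ hqa hq0.le hn0
        _ = (n : ℝ) + 1 := ha_pow
    have hQd : δ x ^ (n + 1) - ((n : ℝ) + 1) * δ x < 0 := by
      have e : δ x ^ (n + 1) = δ x ^ n * δ x := pow_succ _ _
      nlinarith [hq0]
    have hKey : 0 < (x ^ n * x - ((n : ℝ) + 1) * x)
          * (x ^ n * x - ((n : ℝ) + 1) * (δ x ^ n) * x + (n : ℝ) * (δ x ^ n) * δ x)
        + ((δ x ^ n) * δ x - ((n : ℝ) + 1) * δ x)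
          * ((n : ℝ) * (x ^ n) * x - ((n : ℝ) + 1) * (x ^ n) * δ x + (δ x ^ n) * δ x) := by
      apply key_ineq (n : ℝ) hnR x (δ x) (x ^ n) (δ x ^ n) hq0 hqx
      · exact br_pos n hn x (δ x) hq0 hqx
      · have e1 : x ^ (n + 2) = x ^ n * x ^ 2 := by rw [pow_add]
        have e2 : δ x ^ (n + 2) = δ x ^ n * δ x ^ 2 := by rw [pow_add]
        rw [e1, e2] at hc
        exact hc
    have hmul : (δ x ^ (n + 1) - ((n : ℝ) + 1) * δ x)
        * ((((n : ℝ) + 1) * x ^ n - (((n : ℝ) + 1) * δ x ^ n) * d) * (x - δ x)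
            - (x ^ (n + 1) - δ x ^ (n + 1)) * (1 - d))
        = (x ^ n * x - ((n : ℝ) + 1) * x)
          * (x ^ n * x - ((n : ℝ) + 1) * (δ x ^ n) * x + (n : ℝ) * (δ x ^ n) * δ x)
        + ((δ x ^ n) * δ x - ((n : ℝ) + 1) * δ x)
          * ((n : ℝ) * (x ^ n) * x - ((n : ℝ) + 1) * (x ^ n) * δ x + (δ x ^ n) * δ x) := by
      linear_combination (x ^ (n + 1) - ((n : ℝ) + 1) * (δ x ^ n) * x + (n : ℝ) * (δ x ^ n) * δ x) * hd'
    by_contra hcontra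
    push_neg at hcontra
    have hle := mul_nonpos_of_nonpos_of_nonneg hQd.le hcontra
    rw [hmul] at hle
    linarith
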